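/- Let R be a UFD and I an ideal with R/I ≅ ℤ/4ℤ. Then every τ_I-atomic element a ∈ R has τ_I-elasticity ρ_I(a) = 1; i.e., all τ_I-factorizations of a into τ_I-atoms have the same length. -/

import Mathlib

open Polynomial
open scoped ENNReal

variable {R : Type*} [CommRing R]

/-- `a = λ b₁ ⋯ b_k` with `λ` a unit, `k ≥ 1`, and all `bᵢ` pairwise congruent mod `I`. -/
def IsTauFactorization (I : Ideal R) (a : R) (L : List R) : Prop :=
  L ≠ [] ∧ (∃ u : R, IsUnit u ∧ a = u * L.prod) ∧
    ∀ b ∈ L, ∀ c ∈ L, Ideal.Quotient.mk I b = Ideal.Quotient.mk I c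

/-- A `τ_I`-atom: a nonzero nonunit whose only `τ_I`-factorizations have length one. -/
def IsTauAtom (I : Ideal R) (a : R) : Prop :=
  a ≠ 0 ∧ ¬ IsUnit a ∧ ∀ L : List R, IsTauFactorization I a L → L.length = 1

/-- A `τ_I`-factorization into `τ_I`-atoms. -/
def IsTauAtomicFactorization (I : Ideal R) (a : R) (L : List R) : Prop :=
  IsTauFactorization I a L ∧ ∀ b ∈ L, IsTauAtom I b

/-- An element is `τ_I`-atomic if it has a `τ_I`-factorization into `τ_I`-atoms. -/
def IsTauAtomic (I : Ideal R) (a : R) : Prop :=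
  ∃ L : List R, IsTauAtomicFactorization I a L

/-- The `τ_I`-elasticity of an element: `sup{k/l}` over pairs of atomic `τ_I`-factorizations. -/
noncomputable def tauElasticity (I : Ideal R) (a : R) : ℝ≥0∞ :=
  sSup {r : ℝ≥0∞ | ∃ L₁ L₂ : List R, IsTauAtomicFactorization I a L₁ ∧
    IsTauAtomicFactorization I a L₂ ∧
    r = (L₁.length : ℝ≥0∞) / (L₂.length : ℝ≥0∞)}

/-- The `τ_I`-elasticity of the ring: the supremum over `τ_I`-atomic elements. -/
noncomputable def tauRingElasticity (I : Ideal R) : ℝ≥0∞ :=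
  ⨆ a ∈ {a : R | IsTauAtomic I a}, tauElasticity I a

/-! ### Auxiliary lemmas -/

section Aux

lemma zmod4_cases : ∀ a : ZMod 4, a ≠ 0 → a ≠ 2 → a = 1 ∨ a = 3 := by decide

lemma zmod4_unit_eq : ∀ a b : ZMod 4, a * b = 1 → a = 1 ∨ a = 3 := by decide

lemma zmod4_unit_cases {a : ZMod 4} (h : IsUnit a) : a = 1 ∨ a = 3 := by
  obtain ⟨u, rfl⟩ := h
  exact zmod4_unit_eq u.val u.inv u.val_inv

lemma zmod4_prod (s : Multiset (ZMod 4)) (h0 : s.countP (· = 0) = 0) :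
    s.prod = 2 ^ (s.countP (· = 2)) ∨ s.prod = 3 * 2 ^ (s.countP (· = 2)) := by
  induction s using Multiset.induction with
  | empty => simp
  | cons a s ih =>
    rw [Multiset.countP_cons] at h0 ⊢
    have ha0 : ¬ (a = 0) := by
      intro h; simp [h] at h0
    have hs0 : s.countP (· = 0) = 0 := by omega
    rcases ih hs0 with h | h <;> rw [Multiset.prod_cons, h]
    · by_cases ha2 : a = 2
      · left; simp [ha2, pow_succ]; ring
      · rcases zmod4_cases a ha0 ha2 with rfl | rfl
        · left; simp [ha2]
        · right; simp [ha2]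
    · by_cases ha2 : a = 2
      · right; simp [ha2, pow_succ]; ring
      · rcases zmod4_cases a ha0 ha2 with rfl | rfl
        · right; simp [ha2]
        · left; simp [ha2]
          rw [← mul_assoc, show (3:ZMod 4)*3 = 9 by norm_num,
            show (9:ZMod 4) = 1 by decide, one_mul]

lemma zmod4_two_pow {c : ℕ} (hc : 2 ≤ c) : (2 : ZMod 4) ^ c = 0 := by
  obtain ⟨d, rfl⟩ := Nat.exists_eq_add_of_le hc
  rw [pow_add, show (2:ZMod 4)^2 = 0 by decide, zero_mul]

lemma zmod4_two_mul_units : ∀ w z : ZMod 4, (w = 1 ∨ w = 3) → (z = 1 ∨ z = 3) →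
    2 * w * z = 2 := by decide

attribute [local instance] UniqueFactorizationMonoid.normalizationMonoid

open UniqueFactorizationMonoid

variable [IsDomain R] [UniqueFactorizationMonoid R]
variable (I : Ideal R) (f : (R ⧸ I) ≃+* ZMod 4)

/-- the class map as a ring hom -/
noncomputable def clsHom : R →+* ZMod 4 := f.toRingHom.comp (Ideal.Quotient.mk I)

lemma mk_eq_iff_cls {x y : R} :
    Ideal.Quotient.mk I x = Ideal.Quotient.mk I y ↔ clsHom I f x = clsHom I f y := by
  constructor
  · intro h; simp [clsHom, h]
  · intro h; exact f.injective h

/-- number of prime factors of `x` in class `c` -/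
noncomputable def nC (c : ZMod 4) (x : R) : ℕ :=
  (normalizedFactors x).countP (fun p => clsHom I f p = c)

lemma nC_unit {u : R} (hu : IsUnit u) (c : ZMod 4) : nC I f c u = 0 := by
  have h : normalizedFactors u = 0 := by
    rw [Multiset.eq_zero_iff_forall_notMem]
    intro p hp
    exact (prime_of_normalized_factor p hp).not_unit
      (isUnit_of_dvd_unit (dvd_of_mem_normalizedFactors hp) hu)
  simp [nC, h]

lemma nC_mul {x y : R} (hx : x ≠ 0) (hy : y ≠ 0) (c : ZMod 4) :
    nC I f c (x * y) = nC I f c x + nC I f c y := by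
  rw [nC, normalizedFactors_mul hx hy, Multiset.countP_add]; rfl

lemma nC_list (c : ZMod 4) : ∀ (L : List R), (∀ b ∈ L, b ≠ 0) →
    nC I f c L.prod = (L.map (nC I f c)).sum := by
  intro L
  induction L with
  | nil => intro _; simpa using nC_unit I f isUnit_one c
  | cons b L ih =>
    intro h
    have hb : b ≠ 0 := h b (by simp)
    have hL : ∀ x ∈ L, x ≠ 0 := fun x hx => h x (by simp [hx])
    have hLp : L.prod ≠ 0 := by
      intro h0
      rcases (List.prod_eq_zero_iff).mp h0 with h0
      exact hL 0 h0 rfl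
    rw [List.prod_cons, nC_mul I f hb hLp, ih hL, List.map_cons, List.sum_cons]

lemma cls_eq_prod {x : R} (hx : x ≠ 0) :
    ∃ v : ZMod 4, (v = 1 ∨ v = 3) ∧
      clsHom I f x = ((normalizedFactors x).map (clsHom I f)).prod * v := by
  obtain ⟨u, hu⟩ := (prod_normalizedFactors hx)
  refine ⟨clsHom I f u, zmod4_unit_cases (u.isUnit.map (clsHom I f)), ?_⟩
  calc clsHom I f x = clsHom I f ((normalizedFactors x).prod * u) := by rw [hu]
    _ = _ := by rw [map_mul, map_multiset_prod]

lemma countP_map_link (c : ZMod 4) (M : Multiset R) :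
    (M.map (clsHom I f)).countP (· = c) = M.countP (fun p => clsHom I f p = c) := by
  rw [Multiset.countP_map, Multiset.countP_eq_card_filter]

/-- Every element of class 2 has no class-0 prime factors and exactly one class-2 prime factor. -/
lemma cls_two_counts {b : R} (hb2 : clsHom I f b = 2) :
    nC I f 0 b = 0 ∧ nC I f 2 b = 1 := by
  have hb : b ≠ 0 := by
    intro h; rw [h, map_zero] at hb2; exact (by decide : (0:ZMod 4) ≠ 2) hb2
  obtain ⟨v, hv, hx⟩ := cls_eq_prod I f hb
  have h0 : nC I f 0 b = 0 := by
    by_contra h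
    have hpos : 0 < (normalizedFactors b).countP (fun p => clsHom I f p = 0) :=
      Nat.pos_of_ne_zero h
    obtain ⟨p, hp, hp0⟩ := Multiset.countP_pos.mp hpos
    have : ((normalizedFactors b).map (clsHom I f)).prod = 0 :=
      Multiset.prod_eq_zero (by
        rw [← hp0]; exact Multiset.mem_map_of_mem _ hp)
    rw [this, zero_mul] at hx
    rw [hx] at hb2
    exact (by decide : (0:ZMod 4) ≠ 2) hb2
  refine ⟨h0, ?_⟩
  have h0' : ((normalizedFactors b).map (clsHom I f)).countP (· = 0) = 0 := by
    rw [countP_map_link]; exact h0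
  set c₂ := ((normalizedFactors b).map (clsHom I f)).countP (· = 2) with hc₂
  have hn2 : nC I f 2 b = c₂ := (countP_map_link I f 2 _).symm
  rw [hn2]
  by_contra hne
  have hprod := zmod4_prod _ h0'
  rw [← hc₂] at hprod
  rcases (by omega : c₂ = 0 ∨ 2 ≤ c₂) with hc0 | hge
  · have h2 : (2 : ZMod 4) = ((normalizedFactors b).map (clsHom I f)).prod * v := by
      rw [← hb2, hx]
    rw [hc0] at hprod
    rcases hprod with h | h <;> rw [h] at h2 <;> rcases hv with rfl | rfl <;>
      revert h2 <;> decide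
  · have h0'' : ((normalizedFactors b).map (clsHom I f)).prod = 0 := by
      rcases hprod with h | h <;> rw [h, zmod4_two_pow hge] <;> ring
    rw [h0'', zero_mul] at hx
    rw [hx] at hb2
    exact (by decide : (0:ZMod 4) ≠ 2) hb2

/-- A `τ_I`-atom has class `0` or `2`. -/
lemma atom_cls {b : R} (hb : IsTauAtom I b) : clsHom I f b = 0 ∨ clsHom I f b = 2 := by
  by_contra h
  push_neg at h
  obtain ⟨h0, h2⟩ := h
  rcases zmod4_cases _ h0 h2 with h1 | h3
  · have hfac : IsTauFactorization I b [1, b] := by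
      refine ⟨by simp, ⟨1, isUnit_one, by simp⟩, ?_⟩
      have hm : Ideal.Quotient.mk I (1:R) = Ideal.Quotient.mk I b := by
        rw [mk_eq_iff_cls I f, map_one, h1]
      intro x hx y hy
      simp only [List.mem_cons, List.mem_singleton, List.not_mem_nil, or_false] at hx hy
      rcases hx with rfl | rfl <;> rcases hy with rfl | rfl <;>
        first | rfl | exact hm | exact hm.symm
    have := hb.2.2 _ hfac
    simp at this
  · have hfac : IsTauFactorization I b [-1, b] := by
      refine ⟨by simp, ⟨-1, isUnit_one.neg, by ring_nf; simp⟩, ?_⟩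
      have hm : Ideal.Quotient.mk I (-1:R) = Ideal.Quotient.mk I b := by
        rw [mk_eq_iff_cls I f, map_neg, map_one, h3]
        decide
      intro x hx y hy
      simp only [List.mem_cons, List.mem_singleton, List.not_mem_nil, or_false] at hx hy
      rcases hx with rfl | rfl <;> rcases hy with rfl | rfl <;>
        first | rfl | exact hm | exact hm.symm
    have := hb.2.2 _ hfac
    simp at this

/-- A `τ_I`-atom of class `0` has exactly one class-0 prime factor. -/
lemma cls_zero_atom {b : R} (hb : IsTauAtom I b) (hb0 : clsHom I f b = 0) :
    nC I f 0 b = 1 := by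
  classical
  have hbne : b ≠ 0 := hb.1
  obtain ⟨u, hu⟩ := prod_normalizedFactors hbne
  obtain ⟨v, hv, hx⟩ := cls_eq_prod I f hbne
  set M := normalizedFactors b with hM
  set c₀ := M.countP (fun p => clsHom I f p = 0) with hc₀
  show c₀ = 1
  by_contra hne
  rcases (by omega : c₀ = 0 ∨ 2 ≤ c₀) with h0 | hge0
  · -- no class-0 primes: then at least two class-2 primes, split them off
    have h0' : (M.map (clsHom I f)).countP (· = 0) = 0 := by
      rw [countP_map_link]; rw [hc₀] at h0; exact h0
    have hprod := zmod4_prod _ h0'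
    set c₂ := (M.map (clsHom I f)).countP (· = 2) with hc₂def
    have hge : 2 ≤ c₂ := by
      by_contra hlt
      push_neg at hlt
      have h00 : (0 : ZMod 4) = (M.map (clsHom I f)).prod * v := by rw [← hb0, hx]
      interval_cases c₂ <;>
        rcases hprod with hpp | hpp <;> rw [hpp] at h00 <;> rcases hv with rfl | rfl <;>
          revert h00 <;> decide
    set T := M.filter (fun p => clsHom I f p = 2) with hT
    set Rm := M.filter (fun p => ¬ clsHom I f p = 2) with hRm
    have hMT : T + Rm = M := Multiset.filter_add_not _ M
    have hcardT : c₂ = Multiset.card T := by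
      rw [hc₂def, countP_map_link, Multiset.countP_eq_card_filter]
    have hTne : T ≠ 0 := by
      intro h
      rw [h] at hcardT; simp at hcardT; omega
    obtain ⟨p, hp⟩ := Multiset.exists_mem_of_ne_zero hTne
    set T' := T.erase p with hT'
    have hTT : p ::ₘ T' = T := Multiset.cons_erase hp
    set L : List R := (p * Rm.prod * u) :: T'.toList with hLdef
    have hcardT' : c₂ = Multiset.card T' + 1 := by
      rw [hcardT, ← hTT, Multiset.card_cons]
    have hlen : L.length = c₂ := by
      rw [hLdef, List.length_cons, Multiset.length_toList, ← hcardT']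
    have hRm0 : (Rm.map (clsHom I f)).countP (· = 0) = 0 := by
      rw [countP_map_link, hRm]
      have hle := Multiset.countP_le_of_le (fun p => clsHom I f p = 0)
        (Multiset.filter_le (fun p => ¬ clsHom I f p = 2) M)
      rw [← hc₀] at hle
      omega
    have hRm2 : (Rm.map (clsHom I f)).countP (· = 2) = 0 := by
      rw [countP_map_link, Multiset.countP_eq_zero]
      intro q hq
      rw [hRm, Multiset.mem_filter] at hq
      exact hq.2
    have hRmunit := zmod4_prod _ hRm0
    rw [hRm2, pow_zero, mul_one] at hRmunit
    have hheadcls : clsHom I f (p * Rm.prod * u) = 2 := by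
      rw [map_mul, map_mul, map_multiset_prod]
      have hp2 : clsHom I f p = 2 := by
        rw [hT, Multiset.mem_filter] at hp
        exact hp.2
      rw [hp2]
      exact zmod4_two_mul_units _ _ hRmunit (zmod4_unit_cases (u.isUnit.map (clsHom I f)))
    have hall : ∀ x ∈ L, clsHom I f x = 2 := by
      intro x hx
      rcases List.mem_cons.mp hx with rfl | hx
      · exact hheadcls
      · have hxT : x ∈ T := Multiset.mem_of_mem_erase (Multiset.mem_toList.mp hx)
        rw [hT, Multiset.mem_filter] at hxT
        exact hxT.2
    have hfac : IsTauFactorization I b L := by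
      refine ⟨by simp [hLdef], ⟨1, isUnit_one, ?_⟩, ?_⟩
      · rw [one_mul, hLdef, List.prod_cons, Multiset.prod_toList, ← hu, ← hMT,
          Multiset.prod_add, ← hTT, Multiset.prod_cons]
        ring
      · intro x hx y hy
        rw [mk_eq_iff_cls I f, hall x hx, hall y hy]
    have := hb.2.2 _ hfac
    rw [hlen] at this
    omega
  · -- at least two class-0 primes: split one off
    have hpos : 0 < M.countP (fun p => clsHom I f p = 0) := by omega
    obtain ⟨p, hp, hp0⟩ := Multiset.countP_pos.mp hpos
    set M' := M.erase p with hM'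
    have hMM : p ::ₘ M' = M := Multiset.cons_erase hp
    have hM'pos : 0 < M'.countP (fun p => clsHom I f p = 0) := by
      have hcnt : c₀ = M'.countP (fun p => clsHom I f p = 0) + 1 := by
        rw [hc₀, ← hMM, Multiset.countP_cons, if_pos hp0]
      omega
    obtain ⟨q, hq, hq0⟩ := Multiset.countP_pos.mp hM'pos
    have hcls : ∀ x ∈ [p, M'.prod * u], clsHom I f x = 0 := by
      intro x hx
      simp only [List.mem_cons, List.mem_singleton, List.not_mem_nil, or_false] at hx
      rcases hx with rfl | rfl
      · exact hp0
      · rw [map_mul, map_multiset_prod]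
        have : (M'.map (clsHom I f)).prod = 0 :=
          Multiset.prod_eq_zero (by rw [← hq0]; exact Multiset.mem_map_of_mem _ hq)
        rw [this, zero_mul]
    have hfac : IsTauFactorization I b [p, M'.prod * u] := by
      refine ⟨by simp, ⟨1, isUnit_one, ?_⟩, ?_⟩
      · rw [one_mul, ← hu, ← hMM, Multiset.prod_cons]
        simp [mul_assoc]
      · intro x hx y hy
        rw [mk_eq_iff_cls I f, hcls x hx, hcls y hy]
    have := hb.2.2 _ hfac
    simp at this

lemma list_map_sum_one {α : Type*} (g : α → ℕ) : ∀ L : List α,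
    (∀ b ∈ L, g b = 1) → (L.map g).sum = L.length := by
  intro L
  induction L with
  | nil => simp
  | cons b L ih =>
    intro h
    simp [h b (by simp), ih (fun x hx => h x (by simp [hx])), Nat.add_comm]

lemma list_map_sum_zero {α : Type*} (g : α → ℕ) : ∀ L : List α,
    (∀ b ∈ L, g b = 0) → (L.map g).sum = 0 := by
  intro L
  induction L with
  | nil => simp
  | cons b L ih =>
    intro h
    simp [h b (by simp), ih (fun x hx => h x (by simp [hx]))]

lemma fact_count {a : R} {L : List R} (hL : IsTauAtomicFactorization I a L) :
    nC I f 0 a = L.length ∨ (nC I f 0 a = 0 ∧ nC I f 2 a = L.length) := by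
  obtain ⟨⟨hne, ⟨u, hu, hau⟩, hcong⟩, hatoms⟩ := hL
  obtain ⟨b0, hb0⟩ := List.exists_mem_of_ne_nil L hne
  have hnz : ∀ x ∈ L, x ≠ 0 := fun x hx => (hatoms x hx).1
  have hLp : L.prod ≠ 0 := fun h => hnz 0 ((List.prod_eq_zero_iff).mp h) rfl
  have hcls : ∀ x ∈ L, clsHom I f x = clsHom I f b0 := fun x hx =>
    (mk_eq_iff_cls I f).mp (hcong x hx b0 hb0)
  have hsum : ∀ c, nC I f c a = (L.map (nC I f c)).sum := by
    intro c
    rw [hau, nC_mul I f hu.ne_zero hLp, nC_unit I f hu, nC_list I f c L hnz, zero_add]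
  rcases atom_cls I f (hatoms b0 hb0) with h0 | h2
  · left
    rw [hsum 0]
    exact list_map_sum_one _ L fun x hx =>
      cls_zero_atom I f (hatoms x hx) (by rw [hcls x hx, h0])
  · right
    constructor
    · rw [hsum 0]
      exact list_map_sum_zero _ L fun x hx =>
        (cls_two_counts I f (by rw [hcls x hx, h2])).1
    · rw [hsum 2]
      exact list_map_sum_one _ L fun x hx =>
        (cls_two_counts I f (by rw [hcls x hx, h2])).2

end Aux

/-- UFD `R`, `R/I ≅ ℤ/4ℤ`: every `τ_I`-atomic element has `τ_I`-elasticity `1`,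
i.e. all its `τ_I`-factorizations into atoms have the same length. -/
theorem stmt_10 {R : Type*} [CommRing R] [IsDomain R] [UniqueFactorizationMonoid R]
    (I : Ideal R) (f : (R ⧸ I) ≃+* ZMod 4) (a : R) (ha : IsTauAtomic I a) :
    tauElasticity I a = 1 ∧
    ∀ L₁ L₂ : List R, IsTauAtomicFactorization I a L₁ →
      IsTauAtomicFactorization I a L₂ → L₁.length = L₂.length := by
  have key : ∀ L₁ L₂ : List R, IsTauAtomicFactorization I a L₁ →
      IsTauAtomicFactorization I a L₂ → L₁.length = L₂.length := by
    intro L₁ L₂ h₁ h₂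
    have hne₁ : L₁.length ≠ 0 := fun h => h₁.1.1 (List.length_eq_zero_iff.mp h)
    have hne₂ : L₂.length ≠ 0 := fun h => h₂.1.1 (List.length_eq_zero_iff.mp h)
    rcases fact_count I f h₁ with hA | hA <;> rcases fact_count I f h₂ with hB | hB <;> omega
  refine ⟨?_, key⟩
  obtain ⟨L₀, hL₀⟩ := ha
  have hlen₀ : (L₀.length : ℝ≥0∞) ≠ 0 :=
    Nat.cast_ne_zero.mpr fun h => hL₀.1.1 (List.length_eq_zero_iff.mp h)
  apply le_antisymm
  · apply sSup_le
    rintro r ⟨L₁, L₂, h₁, h₂, rfl⟩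
    rw [key L₁ L₂ h₁ h₂]
    exact le_of_eq (ENNReal.div_self
      (Nat.cast_ne_zero.mpr fun h => h₂.1.1 (List.length_eq_zero_iff.mp h))
      (ENNReal.natCast_ne_top _))
  · exact le_sSup ⟨L₀, L₀, hL₀, hL₀,
      (ENNReal.div_self hlen₀ (ENNReal.natCast_ne_top _)).symm⟩
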